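/- Let N ≥ 1 be an even integer and let p be an integer with 1 ≤ p ≤ N. Then ∑_{i = p+1-N/2}^{N/2} cos((2i-1)π/(2N)) = cos²(pπ/(2N)) / sin(π/(2N)). -/

import Mathlib

open Real Finset

lemma Icc_insert_top (a b : ℤ) (h : a ≤ b + 1) :
    Finset.Icc a (b + 1) = insert (b + 1) (Finset.Icc a b) := by
  ext x; simp [Finset.mem_Icc]; omega

lemma telescope (f : ℤ → ℝ) (a : ℤ) : ∀ b : ℤ, a - 1 ≤ b →
    ∑ i ∈ Finset.Icc a b, (f i - f (i - 1)) = f b - f (a - 1) := by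
  refine Int.le_induction ?_ ?_
  · simp [Finset.Icc_eq_empty_of_lt (by omega : a - 1 < a)]
  · intro n hn ih
    rw [Icc_insert_top a n (by omega), Finset.sum_insert (by simp [Finset.mem_Icc]), ih]
    ring

theorem sum_cos_even_case (N p : ℤ) (hN : 1 ≤ N) (hNe : Even N) (hp1 : 1 ≤ p) (hpN : p ≤ N) :
    ∑ i ∈ Finset.Icc (p + 1 - N / 2) (N / 2),
        Real.cos ((2 * (i : ℝ) - 1) * Real.pi / (2 * (N : ℝ))) =
      Real.cos ((p : ℝ) * Real.pi / (2 * (N : ℝ))) ^ 2 / Real.sin (Real.pi / (2 * (N : ℝ))) := by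
  obtain ⟨m, hm⟩ := hNe
  have hdiv : N / 2 = m := by omega
  have hNpos : (0:ℝ) < (N:ℝ) := by exact_mod_cast hN
  set θ := Real.pi / (2 * (N : ℝ)) with hθ
  have hθpos : 0 < θ := by positivity
  have hθlt : θ < Real.pi := by
    have h1N : (1:ℝ) ≤ (N:ℝ) := by exact_mod_cast hN
    rw [hθ, div_lt_iff₀ (by positivity)]
    nlinarith [Real.pi_pos]
  have hsθ : 0 < Real.sin θ := Real.sin_pos_of_pos_of_lt_pi hθpos hθlt
  set f : ℤ → ℝ := fun i => Real.sin (2 * (i:ℝ) * θ) / (2 * Real.sin θ) with hf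
  have key : ∀ i : ℤ, Real.cos ((2 * (i : ℝ) - 1) * Real.pi / (2 * (N : ℝ)))
      = f i - f (i - 1) := by
    intro i
    simp only [hf]
    push_cast
    rw [div_sub_div_same, eq_div_iff (by positivity), Real.sin_sub_sin]
    rw [show (2*(i:ℝ)*θ - 2*((i:ℝ)-1)*θ)/2 = θ by ring,
        show (2*(i:ℝ)*θ + 2*((i:ℝ)-1)*θ)/2 = (2*(i:ℝ)-1)*θ by ring,
        show (2*(i:ℝ)-1)*Real.pi/(2*(N:ℝ)) = (2*(i:ℝ)-1)*θ by rw [hθ]; ring]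
    ring
  rw [Finset.sum_congr rfl (fun i _ => key i), hdiv,
      telescope f (p + 1 - m) m (by omega)]
  have hNm : (N:ℝ) = 2 * (m:ℝ) := by exact_mod_cast congrArg Int.cast hm |>.trans (by push_cast; ring)
  have hmpos : (0:ℝ) < (m:ℝ) := by linarith [hNm ▸ hNpos]
  have h1 : f m = 1 / (2 * Real.sin θ) := by
    simp only [hf, hθ, hNm]
    rw [show 2*(m:ℝ)*(Real.pi/(2*(2*(m:ℝ)))) = Real.pi/2 by field_simp]
    rw [Real.sin_pi_div_two]
  have h2 : f (p + 1 - m - 1) = -Real.cos ((p:ℝ) * Real.pi / (N:ℝ)) / (2 * Real.sin θ) := by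
    simp only [hf, hθ]
    push_cast
    rw [show 2*((p:ℝ)+1-(m:ℝ)-1)*(Real.pi/(2*(N:ℝ))) = (p:ℝ)*Real.pi/(N:ℝ) - Real.pi/2 by
      rw [hNm]; field_simp; ring]
    rw [Real.sin_sub_pi_div_two]
  rw [h1, h2]
  have h3 : Real.cos ((p:ℝ) * Real.pi / (2*(N:ℝ))) ^ 2 = 1/2 + Real.cos ((p:ℝ)*Real.pi/(N:ℝ))/2 := by
    rw [Real.cos_sq]
    congr 2
    field_simp
  rw [h3]
  field_simp
  ring
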